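/- Let d2 > 0, y⋆ > 0, KP ≥ 0, KI > 0, u0 ∈ ℝ and set d1 = 0, and let χ̄ := (d2·y⋆², y⋆, (1 - u0·y⋆)/(KI·y⋆)). Then the determinant of the Jacobian matrix ∇f(χ̄) of the PI closed-loop vector field equals KI; equivalently, the constant coefficient a0 of the characteristic polynomial λ³ + a2·λ² + a1·λ + a0 of ∇f(χ̄) equals -KI < 0. -/

import Mathlib

noncomputable def tripleEquiv : (ℝ × ℝ × ℝ) ≃ₗ[ℝ] (Fin 3 → ℝ) where
  toFun χ := ![χ.1, χ.2.1, χ.2.2]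
  invFun v := (v 0, v 1, v 2)
  map_add' a b := by funext i; fin_cases i <;> simp
  map_smul' c a := by funext i; fin_cases i <;> simp
  left_inv χ := by simp
  right_inv v := by funext i; fin_cases i <;> simp

noncomputable def tripleBasis : Module.Basis (Fin 3) ℝ (ℝ × ℝ × ℝ) := Module.Basis.ofEquivFun tripleEquiv

open ContinuousLinearMap in
noncomputable def P1 : (ℝ × ℝ × ℝ) →L[ℝ] ℝ := fst ℝ ℝ (ℝ × ℝ)
open ContinuousLinearMap in
noncomputable def P2 : (ℝ × ℝ × ℝ) →L[ℝ] ℝ := (fst ℝ ℝ ℝ).comp (snd ℝ ℝ (ℝ × ℝ))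
open ContinuousLinearMap in
noncomputable def P3 : (ℝ × ℝ × ℝ) →L[ℝ] ℝ := (snd ℝ ℝ ℝ).comp (snd ℝ ℝ (ℝ × ℝ))

theorem key_deriv (d2 ystar KP KI u0 : ℝ)
    (f : ℝ × ℝ × ℝ → ℝ × ℝ × ℝ)
    (hf : ∀ χ : ℝ × ℝ × ℝ,
      f χ = (1 - (u0 + KI * χ.2.2 + KP * (ystar - χ.2.1)) * χ.2.1,
             -d2 * χ.2.1 + (u0 + KI * χ.2.2 + KP * (ystar - χ.2.1)) * χ.1,
             ystar - χ.2.1))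
    (χ : ℝ × ℝ × ℝ) :
    HasFDerivAt f
      ((-((u0 + KI * χ.2.2 + KP * (ystar - χ.2.1)) • P2 + χ.2.1 • (KI • P3 - KP • P2))).prod
        ((((-d2) • P2) + ((u0 + KI * χ.2.2 + KP * (ystar - χ.2.1)) • P1 + χ.1 • (KI • P3 - KP • P2))).prod
          (-P2))) χ := by
  have h1 : HasFDerivAt (fun χ : ℝ × ℝ × ℝ => χ.1) P1 χ := hasFDerivAt_fst
  have h2 : HasFDerivAt (fun χ : ℝ × ℝ × ℝ => χ.2.1) P2 χ :=
    hasFDerivAt_fst.comp χ hasFDerivAt_snd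
  have h3 : HasFDerivAt (fun χ : ℝ × ℝ × ℝ => χ.2.2) P3 χ :=
    hasFDerivAt_snd.comp χ hasFDerivAt_snd
  have hu : HasFDerivAt (fun χ : ℝ × ℝ × ℝ => u0 + KI * χ.2.2 + KP * (ystar - χ.2.1))
      (KI • P3 - KP • P2) χ := by
    have h := (((h3.const_mul KI).const_add u0).add (((h2.const_sub ystar)).const_mul KP))
    rw [show KI • P3 - KP • P2 = KI • P3 + KP • (-P2) by rw [smul_neg, ← sub_eq_add_neg]]
    exact h
  have hF1 := (hu.mul h2).const_sub 1
  have hF2 := (h2.const_mul (-d2)).add (hu.mul h1)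
  have hF3 := h2.const_sub ystar
  have h := hF1.prodMk (hF2.prodMk hF3)
  have hfun : f = fun χ : ℝ × ℝ × ℝ =>
      (1 - (u0 + KI * χ.2.2 + KP * (ystar - χ.2.1)) * χ.2.1,
       -d2 * χ.2.1 + (u0 + KI * χ.2.2 + KP * (ystar - χ.2.1)) * χ.1,
       ystar - χ.2.1) := funext hf
  rw [hfun]
  exact h

/-- with d1 = 0 the determinant of the Jacobian of the PI closed-loop
vector field at the unique equilibrium equals KI; equivalently the constant coefficient
of its characteristic polynomial equals -KI < 0. -/
theorem boost_pi_jacobian_det_d1_zero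
    (d2 ystar KP KI u0 : ℝ) (hd2 : 0 < d2) (hy : 0 < ystar)
    (hKP : 0 ≤ KP) (hKI : 0 < KI)
    (f : ℝ × ℝ × ℝ → ℝ × ℝ × ℝ)
    (hf : ∀ χ : ℝ × ℝ × ℝ,
      f χ = (1 - (u0 + KI * χ.2.2 + KP * (ystar - χ.2.1)) * χ.2.1,
             -d2 * χ.2.1 + (u0 + KI * χ.2.2 + KP * (ystar - χ.2.1)) * χ.1,
             ystar - χ.2.1))
    (χbar : ℝ × ℝ × ℝ)
    (hχbar : χbar = (d2 * ystar ^ 2, ystar, (1 - u0 * ystar) / (KI * ystar))) :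
    LinearMap.det ((fderiv ℝ f χbar : ℝ × ℝ × ℝ →L[ℝ] ℝ × ℝ × ℝ) :
        ℝ × ℝ × ℝ →ₗ[ℝ] ℝ × ℝ × ℝ) = KI ∧
    (LinearMap.charpoly (((fderiv ℝ f χbar : ℝ × ℝ × ℝ →L[ℝ] ℝ × ℝ × ℝ) :
        ℝ × ℝ × ℝ →ₗ[ℝ] ℝ × ℝ × ℝ))).coeff 0 = -KI ∧
    -KI < 0 := by
  have hder := (key_deriv d2 ystar KP KI u0 f hf χbar).fderiv
  rw [hder]
  set L := ((-((u0 + KI * χbar.2.2 + KP * (ystar - χbar.2.1)) • P2 + χbar.2.1 • (KI • P3 - KP • P2))).prod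
        ((((-d2) • P2) + ((u0 + KI * χbar.2.2 + KP * (ystar - χbar.2.1)) • P1 + χbar.1 • (KI • P3 - KP • P2))).prod
          (-P2))) with hL
  have hdet : LinearMap.det (L : ℝ × ℝ × ℝ →ₗ[ℝ] ℝ × ℝ × ℝ) = KI := by
    rw [← LinearMap.det_toMatrix tripleBasis]
    rw [Matrix.det_fin_three]
    simp only [LinearMap.toMatrix_apply, tripleBasis, Module.Basis.ofEquivFun_repr_apply,
      Module.Basis.coe_ofEquivFun, hL, hχbar]
    simp [tripleEquiv, P1, P2, P3]
    field_simp
    ring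
  refine ⟨hdet, ?_, by linarith⟩
  have := Matrix.det_eq_sign_charpoly_coeff
    (LinearMap.toMatrix tripleBasis tripleBasis (L : ℝ × ℝ × ℝ →ₗ[ℝ] ℝ × ℝ × ℝ))
  rw [LinearMap.det_toMatrix, hdet] at this
  simp only [Fintype.card_fin] at this
  norm_num at this
  linarith
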